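/- For all natural numbers j and k, the Legendre polynomials are orthogonal on [−1, 1]: ∫_{−1}^{1} P_j(x) P_k(x) dx = 0 if j ≠ k, and ∫_{−1}^{1} P_k(x)² dx = 2/(2k + 1). -/

import Mathlib

open Real MeasureTheory intervalIntegral

/-- The Legendre polynomial `P_n`, defined via Rodrigues' formula:
`P_n(x) = 1/(2^n · n!) · dⁿ/dxⁿ (x² − 1)ⁿ`. -/
noncomputable def legendre (n : ℕ) (x : ℝ) : ℝ :=
  (1 / (2 ^ n * n.factorial : ℝ)) * iteratedDeriv n (fun y : ℝ => (y ^ 2 - 1) ^ n) x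

open Polynomial

noncomputable def Rpoly (n : ℕ) : ℝ[X] := (X ^ 2 - 1) ^ n

lemma eval_Rpoly (n : ℕ) (x : ℝ) : (Rpoly n).eval x = (x ^ 2 - 1) ^ n := by
  simp [Rpoly]

lemma iteratedDeriv_poly (m : ℕ) (p : ℝ[X]) :
    iteratedDeriv m (fun y : ℝ => p.eval y) = fun x => (derivative^[m] p).eval x := by
  induction m with
  | zero => simp
  | succ n ih =>
      rw [iteratedDeriv_succ, ih, Function.iterate_succ_apply']
      funext x
      simp [Polynomial.deriv]

lemma exists_factor (n : ℕ) : ∀ m ≤ n, ∃ g : ℝ[X],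
    derivative^[m] (Rpoly n) = (X ^ 2 - 1) ^ (n - m) * g := by
  intro m hm
  induction m with
  | zero => exact ⟨1, by simp [Rpoly]⟩
  | succ m ih =>
      obtain ⟨g, hg⟩ := ih (Nat.le_of_succ_le hm)
      have he : n - m = (n - (m + 1)) + 1 := by omega
      refine ⟨C ((n - m : ℕ) : ℝ) * derivative (X ^ 2 - 1) * g + (X ^ 2 - 1) * derivative g, ?_⟩
      rw [Function.iterate_succ_apply', hg, derivative_mul, derivative_pow, he,
        Nat.add_sub_cancel, pow_succ]
      ring

lemma eval_boundary {n m : ℕ} (h : m < n) {x : ℝ} (hx : x ^ 2 = 1) :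
    (derivative^[m] (Rpoly n)).eval x = 0 := by
  obtain ⟨g, hg⟩ := exists_factor n m h.le
  rw [hg]
  have : n - m ≠ 0 := by omega
  simp [hx, zero_pow this]

lemma poly_ibp (p q : ℝ[X]) :
    ∫ x in (-1 : ℝ)..1, p.eval x * (derivative q).eval x
      = p.eval 1 * q.eval 1 - p.eval (-1) * q.eval (-1)
        - ∫ x in (-1 : ℝ)..1, (derivative p).eval x * q.eval x :=
  integral_mul_deriv_eq_deriv_mul (fun x _ => p.hasDerivAt x) (fun x _ => q.hasDerivAt x)
    ((p.derivative.continuous).intervalIntegrable _ _)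
    ((q.derivative.continuous).intervalIntegrable _ _)

lemma shift (k : ℕ) (p : ℝ[X]) : ∀ m ≤ k,
    ∫ x in (-1 : ℝ)..1, p.eval x * (derivative^[k] (Rpoly k)).eval x
      = (-1 : ℝ) ^ m *
        ∫ x in (-1 : ℝ)..1, (derivative^[m] p).eval x * (derivative^[k - m] (Rpoly k)).eval x := by
  intro m hm
  induction m with
  | zero => simp
  | succ m ih =>
      rw [ih (Nat.le_of_succ_le hm)]
      have hkm : k - m = (k - (m + 1)) + 1 := by omega
      have hlt : k - (m + 1) < k := by omega
      have key : ∫ x in (-1 : ℝ)..1, (derivative^[m] p).eval x * (derivative^[k - m] (Rpoly k)).eval x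
          = - ∫ x in (-1 : ℝ)..1,
              (derivative^[m + 1] p).eval x * (derivative^[k - (m + 1)] (Rpoly k)).eval x := by
        have hsucc : derivative (derivative^[m] p) = derivative^[m + 1] p :=
          (Function.iterate_succ_apply' _ m p).symm
        rw [hkm, Function.iterate_succ_apply', poly_ibp,
          eval_boundary hlt (by norm_num), eval_boundary hlt (by norm_num), hsucc]
        ring
      rw [key, pow_succ]
      ring

lemma natDegree_Rpoly (n : ℕ) : (Rpoly n).natDegree = 2 * n := by
  rw [Rpoly, ← C_1, natDegree_pow, natDegree_X_pow_sub_C, mul_comm]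

lemma core_offdiag {j k : ℕ} (h : j < k) :
    ∫ x in (-1 : ℝ)..1,
      (derivative^[j] (Rpoly j)).eval x * (derivative^[k] (Rpoly k)).eval x = 0 := by
  rw [shift k (derivative^[j] (Rpoly j)) k le_rfl]
  have : derivative^[k] (derivative^[j] (Rpoly j)) = 0 := by
    rw [← Function.iterate_add_apply]
    exact iterate_derivative_eq_zero (by rw [natDegree_Rpoly]; omega)
  simp [this]

lemma core (j k : ℕ) (h : j ≠ k) :
    ∫ x in (-1 : ℝ)..1,
      (derivative^[j] (Rpoly j)).eval x * (derivative^[k] (Rpoly k)).eval x = 0 := by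
  rcases h.lt_or_gt with h | h
  · exact core_offdiag h
  · rw [show (∫ x in (-1 : ℝ)..1,
        (derivative^[j] (Rpoly j)).eval x * (derivative^[k] (Rpoly k)).eval x)
        = ∫ x in (-1 : ℝ)..1,
        (derivative^[k] (Rpoly k)).eval x * (derivative^[j] (Rpoly j)).eval x by
      congr 1
      funext x
      ring]
    exact core_offdiag h

lemma Dtop (k : ℕ) : derivative^[2 * k] (Rpoly k) = C (((2 * k).factorial : ℝ)) := by
  have hdeg : (derivative^[2 * k] (Rpoly k)).natDegree ≤ 0 := by
    have := natDegree_iterate_derivative (Rpoly k) (2 * k)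
    rwa [natDegree_Rpoly, Nat.sub_self] at this
  rw [eq_C_of_natDegree_le_zero hdeg]
  congr 1
  rw [coeff_iterate_derivative]
  have hmonic : (Rpoly k).Monic := by
    rw [Rpoly, ← C_1]
    exact (monic_X_pow_sub_C 1 (by norm_num)).pow k
  have hc : (Rpoly k).coeff (2 * k) = 1 := by
    have := hmonic.leadingCoeff
    rwa [leadingCoeff, natDegree_Rpoly] at this
  simp [hc, Nat.descFactorial_self]

lemma J_val (k : ℕ) : ∫ x in (-1 : ℝ)..1, (x ^ 2 - 1) ^ k
    = (-1 : ℝ) ^ k * 2 ^ (2 * k + 1) * (k.factorial : ℝ) ^ 2 / ((2 * k + 1).factorial : ℝ) := by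
  induction k with
  | zero => norm_num
  | succ k ih =>
      have cont1 : Continuous fun x : ℝ => x ^ 2 * (x ^ 2 - 1) ^ k := by continuity
      have cont2 : Continuous fun x : ℝ => (x ^ 2 - 1) ^ k := by continuity
      -- Fact 1 : J (k+1) = A - J k
      have fact1 : ∫ x in (-1 : ℝ)..1, (x ^ 2 - 1) ^ (k + 1)
          = (∫ x in (-1 : ℝ)..1, x ^ 2 * (x ^ 2 - 1) ^ k)
            - ∫ x in (-1 : ℝ)..1, (x ^ 2 - 1) ^ k := by
        rw [← intervalIntegral.integral_sub (cont1.intervalIntegrable _ _)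
          (cont2.intervalIntegrable _ _)]
        congr 1
        funext x
        ring
      -- Fact 2 : 2(k+1) A = - J(k+1), via integration by parts
      have fact2 : (2 * ((k : ℝ) + 1)) * ∫ x in (-1 : ℝ)..1, x ^ 2 * (x ^ 2 - 1) ^ k
          = - ∫ x in (-1 : ℝ)..1, (x ^ 2 - 1) ^ (k + 1) := by
        have h := poly_ibp X (Rpoly (k + 1))
        have hd : derivative (Rpoly (k + 1)) = C ((k : ℝ) + 1) * (X ^ 2 - 1) ^ k * derivative (X ^ 2 - 1) := by
          rw [Rpoly, derivative_pow]
          norm_num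
        rw [hd] at h
        simp only [eval_mul, eval_C, eval_pow, eval_sub, eval_X, eval_one, derivative_X,
          eval_Rpoly, eval_one] at h
        have hL : ∫ x in (-1 : ℝ)..1, x * (((k : ℝ) + 1) * (x ^ 2 - 1) ^ k * eval x (derivative (X ^ 2 - 1)))
            = (2 * ((k : ℝ) + 1)) * ∫ x in (-1 : ℝ)..1, x ^ 2 * (x ^ 2 - 1) ^ k := by
          rw [← intervalIntegral.integral_const_mul]
          congr 1
          funext x
          have : eval x (derivative (X ^ 2 - 1) : ℝ[X]) = 2 * x := by
            simp [derivative_pow]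
            try ring
          rw [this]
          ring
        rw [hL] at h
        rw [h]
        try norm_num
      have hrec : (2 * (k : ℝ) + 3) * (∫ x in (-1 : ℝ)..1, (x ^ 2 - 1) ^ (k + 1))
          = -(2 * (k : ℝ) + 2) * ∫ x in (-1 : ℝ)..1, (x ^ 2 - 1) ^ k := by
        have h1 : (2 * ((k : ℝ) + 1)) * ((∫ x in (-1 : ℝ)..1, (x ^ 2 - 1) ^ (k + 1))
            + ∫ x in (-1 : ℝ)..1, (x ^ 2 - 1) ^ k) = - ∫ x in (-1 : ℝ)..1, (x ^ 2 - 1) ^ (k + 1) := by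
          rw [← fact2]
          congr 1
          rw [fact1]
          ring
        nlinarith [h1]
      have h3 : (2 * (k : ℝ) + 3) ≠ 0 := by positivity
      have hJ1 : (∫ x in (-1 : ℝ)..1, (x ^ 2 - 1) ^ (k + 1))
          = -(2 * (k : ℝ) + 2) * (∫ x in (-1 : ℝ)..1, (x ^ 2 - 1) ^ k) / (2 * (k : ℝ) + 3) := by
        field_simp
        linarith [hrec]
      rw [hJ1, ih]
      have hf1 : ((2 * (k + 1) + 1).factorial : ℝ)
          = (2 * (k : ℝ) + 3) * (2 * (k : ℝ) + 2) * ((2 * k + 1).factorial : ℝ) := by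
        have : 2 * (k + 1) + 1 = (2 * k + 1) + 1 + 1 := by omega
        rw [this, Nat.factorial_succ, Nat.factorial_succ]
        push_cast
        ring
      have hf2 : ((k + 1).factorial : ℝ) = ((k : ℝ) + 1) * (k.factorial : ℝ) := by
        rw [Nat.factorial_succ]; push_cast; ring
      rw [hf1, hf2]
      have hfk : ((2 * k + 1).factorial : ℝ) ≠ 0 := by positivity
      field_simp
      ring

lemma legendre_eq (n : ℕ) (x : ℝ) :
    legendre n x = (1 / (2 ^ n * n.factorial : ℝ)) * (derivative^[n] (Rpoly n)).eval x := by
  unfold legendre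
  congr 1
  rw [show (fun y : ℝ => (y ^ 2 - 1) ^ n) = fun y => (Rpoly n).eval y from
    funext fun y => (eval_Rpoly n y).symm, iteratedDeriv_poly]

/-- Orthogonality of the Legendre polynomials on `[−1, 1]`:
`∫_{−1}^{1} P_j(x) P_k(x) dx = 0` when `j ≠ k`, and `∫_{−1}^{1} P_k(x)² dx = 2/(2k + 1)`. -/
theorem legendre_orthogonality (j k : ℕ) :
    (j ≠ k → ∫ x in (-1 : ℝ)..1, legendre j x * legendre k x = 0) ∧
      (∫ x in (-1 : ℝ)..1, (legendre k x) ^ 2) = 2 / (2 * (k : ℝ) + 1) := by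
  constructor
  · intro hjk
    simp_rw [legendre_eq]
    have : ∀ x : ℝ, (1 / (2 ^ j * j.factorial : ℝ)) * (derivative^[j] (Rpoly j)).eval x *
        ((1 / (2 ^ k * k.factorial : ℝ)) * (derivative^[k] (Rpoly k)).eval x)
        = ((1 / (2 ^ j * j.factorial : ℝ)) * (1 / (2 ^ k * k.factorial : ℝ))) *
          ((derivative^[j] (Rpoly j)).eval x * (derivative^[k] (Rpoly k)).eval x) := by
      intro x; ring
    simp_rw [this]
    rw [intervalIntegral.integral_const_mul, core j k hjk, mul_zero]
  · simp_rw [legendre_eq]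
    have : ∀ x : ℝ, ((1 / (2 ^ k * k.factorial : ℝ)) * (derivative^[k] (Rpoly k)).eval x) ^ 2
        = (1 / (2 ^ k * k.factorial : ℝ)) ^ 2 *
          ((derivative^[k] (Rpoly k)).eval x * (derivative^[k] (Rpoly k)).eval x) := by
      intro x; ring
    simp_rw [this]
    rw [intervalIntegral.integral_const_mul]
    have hshift := shift k (derivative^[k] (Rpoly k)) k le_rfl
    rw [Nat.sub_self, Function.iterate_zero_apply, ← Function.iterate_add_apply,
      show k + k = 2 * k by ring, Dtop] at hshift
    rw [hshift]
    have hI : ∫ x in (-1 : ℝ)..1, eval x (C (((2 * k).factorial : ℝ))) * (Rpoly k).eval x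
        = ((2 * k).factorial : ℝ) * ((-1 : ℝ) ^ k * 2 ^ (2 * k + 1) * (k.factorial : ℝ) ^ 2
            / ((2 * k + 1).factorial : ℝ)) := by
      simp_rw [eval_C, eval_Rpoly]
      rw [intervalIntegral.integral_const_mul, J_val]
    rw [hI]
    have hf : ((2 * k + 1).factorial : ℝ) = (2 * (k : ℝ) + 1) * ((2 * k).factorial : ℝ) := by
      rw [Nat.factorial_succ]; push_cast; ring
    rw [hf]
    have h1 : ((2 * k).factorial : ℝ) ≠ 0 := by positivity
    have h2 : (k.factorial : ℝ) ≠ 0 := by positivity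
    have h3 : (2 * (k : ℝ) + 1) ≠ 0 := by positivity
    have h4 : (2 : ℝ) ^ k ≠ 0 := by positivity
    field_simp
    ring_nf
    simp only [pow_mul', neg_one_sq, one_pow, mul_one, one_mul]
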